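/- Among all rooted trees (posets in which every element is covered by at most one element, with a unique maximal element) with n elements and rank r (maximum chain size), where 1 < r ≤ n, the tree H_{n,r} — a chain of r elements with the remaining n-r elements attached as children of the second-smallest chain element — is the unique maximizer of the sum of hook lengths Σ_{u∈P} h_u, where h_u = #{t ∈ P : t ≤ u}. Consequently, for any such tree P, Σ_{k=1}^n k − Σ_{u∈P} h_u ≥ binom(n−r+1, 2). -/

import Mathlib

open scoped Classical

def Hle {n : ℕ} (r : ℕ) (x y : Fin n) : Prop :=
  x = y ∨ ((x : ℕ) < r ∧ (y : ℕ) < r ∧ (x : ℕ) ≤ (y : ℕ)) ∨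
    (r ≤ (x : ℕ) ∧ 1 ≤ (y : ℕ) ∧ (y : ℕ) < r)

section Stmt14Aux

open Finset

variable {α : Type*} [Fintype α] [PartialOrder α]

noncomputable def lev (x : α) : ℕ := (Finset.univ.filter fun t => x ≤ t).card

lemma lev_pos (x : α) : 1 ≤ lev x :=
  Finset.card_pos.mpr ⟨x, by simp⟩

lemma ups_subset {x y : α} (h : x ≤ y) :
    (Finset.univ.filter fun t => y ≤ t) ⊆ (Finset.univ.filter fun t => x ≤ t) := by
  intro t ht
  simp only [mem_filter, mem_univ, true_and] at *
  exact h.trans ht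

lemma lev_le_of_le {x y : α} (h : x ≤ y) : lev y ≤ lev x :=
  Finset.card_le_card (ups_subset h)

lemma lev_lt_of_lt {x y : α} (h : x < y) : lev y < lev x := by
  apply Finset.card_lt_card
  rw [Finset.ssubset_iff_of_subset (ups_subset h.le)]
  exact ⟨x, by simp, by simp [h.not_ge]⟩

section Tree

variable (htree : ∀ x y z : α, x ⋖ y → x ⋖ z → y = z)
include htree

lemma comp_of_le_aux : ∀ k (x y z : α), lev x ≤ k → x ≤ y → x ≤ z → y ≤ z ∨ z ≤ y := by
  intro k
  induction k with
  | zero => intro x y z hk _ _; exact absurd hk (by have := lev_pos x; omega)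
  | succ k ih =>
    intro x y z hk hy hz
    rcases hy.lt_or_eq with hxy | rfl
    · rcases hz.lt_or_eq with hxz | rfl
      · obtain ⟨w₁, hc1, hw1⟩ := exists_covBy_le_of_lt hxy
        obtain ⟨w₂, hc2, hw2⟩ := exists_covBy_le_of_lt hxz
        have hw : w₁ = w₂ := htree x w₁ w₂ hc1 hc2
        subst hw
        exact ih w₁ y z (by have := lev_lt_of_lt hc1.lt; omega) hw1 hw2
      · right; exact hy
    · left; exact hz

lemma comp_of_le {x y z : α} (hy : x ≤ y) (hz : x ≤ z) : y ≤ z ∨ z ≤ y :=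
  comp_of_le_aux htree (lev x) x y z le_rfl hy hz

lemma ups_chain (x : α) : IsChain (· ≤ ·) ((Finset.univ.filter fun t => x ≤ t : Finset α) : Set α) := by
  intro a ha b hb _
  simp only [Finset.mem_coe, mem_filter, mem_univ, true_and] at ha hb
  exact comp_of_le htree ha hb

lemma lev_image (x : α) :
    Finset.image lev (Finset.univ.filter fun t => x ≤ t) = Finset.Icc 1 (lev x) := by
  apply Finset.eq_of_subset_of_card_le
  · intro d hd
    simp only [Finset.mem_image, mem_filter, mem_univ, true_and] at hd
    obtain ⟨t, ht, rfl⟩ := hd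
    exact Finset.mem_Icc.mpr ⟨lev_pos t, lev_le_of_le ht⟩
  · rw [Nat.card_Icc]
    have : Finset.card (Finset.image lev (Finset.univ.filter fun t => x ≤ t))
        = (Finset.univ.filter fun t => x ≤ t).card := by
      apply Finset.card_image_of_injOn
      intro a ha b hb hab
      simp only [Finset.mem_coe, mem_filter, mem_univ, true_and] at ha hb
      rcases comp_of_le htree ha hb with h | h
      · rcases h.lt_or_eq with h' | h'
        · exact absurd hab (by have := lev_lt_of_lt h'; omega)
        · exact h'
      · rcases h.lt_or_eq with h' | h'
        · exact absurd hab (by have := lev_lt_of_lt h'; omega)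
        · exact h'.symm
    have hrfl : lev x = (Finset.univ.filter fun t => x ≤ t).card := rfl
    omega

lemma lev_surj (x : α) (d : ℕ) (h1 : 1 ≤ d) (h2 : d ≤ lev x) : ∃ t, x ≤ t ∧ lev t = d := by
  have hd : d ∈ Finset.Icc 1 (lev x) := Finset.mem_Icc.mpr ⟨h1, h2⟩
  rw [← lev_image htree x] at hd
  simp only [Finset.mem_image, mem_filter, mem_univ, true_and] at hd
  obtain ⟨t, ht, hlt⟩ := hd
  exact ⟨t, ht, hlt⟩

end Tree

/-- count of elements `j : Fin n` with `a ≤ j < b`. -/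
lemma card_fin_band (n a b : ℕ) (hb : b ≤ n) :
    (Finset.univ.filter fun j : Fin n => a ≤ (j : ℕ) ∧ (j : ℕ) < b).card = b - a := by
  rw [← Nat.card_Ico a b]
  apply Finset.card_bij (fun (j : Fin n) _ => (j : ℕ))
  · intro j hj
    simp only [mem_filter, mem_univ, true_and] at hj
    exact Finset.mem_Ico.mpr hj
  · intro j _ j' _ h
    exact Fin.ext h
  · intro k hk
    rw [Finset.mem_Ico] at hk
    exact ⟨⟨k, lt_of_lt_of_le hk.2 hb⟩, by simp [hk.1, hk.2], rfl⟩

lemma hle_card (n r : ℕ) (hr1 : 1 < r) (hrn : r ≤ n) (i : Fin n) :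
    (Finset.univ.filter fun j : Fin n => Hle r i j).card
      = if (i : ℕ) < r then r - (i : ℕ) else r := by
  split_ifs with h
  · have he : (Finset.univ.filter fun j : Fin n => Hle r i j)
        = Finset.univ.filter fun j : Fin n => (i : ℕ) ≤ (j : ℕ) ∧ (j : ℕ) < r := by
      ext j
      simp only [mem_filter, mem_univ, true_and, Hle, Fin.ext_iff]
      omega
    rw [he, card_fin_band n i r hrn]
  · have he : (Finset.univ.filter fun j : Fin n => Hle r i j)
        = insert i (Finset.univ.filter fun j : Fin n => 1 ≤ (j : ℕ) ∧ (j : ℕ) < r) := by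
      ext j
      simp only [mem_filter, mem_univ, true_and, Finset.mem_insert, Hle, Fin.ext_iff]
      omega
    rw [he, Finset.card_insert_of_notMem (by simp; omega), card_fin_band n 1 r hrn]
    omega

end Stmt14Aux

theorem stmt14 {α : Type*} [Fintype α] [PartialOrder α]
    (n r : ℕ) (hcard : Fintype.card α = n) (hr1 : 1 < r) (hrn : r ≤ n)
    (htree : ∀ x y z : α, x ⋖ y → x ⋖ z → y = z)
    (hroot : ∃ mx : α, ∀ x, x ≤ mx)
    (hrank : (∃ c : Finset α, IsChain (· ≤ ·) (c : Set α) ∧ c.card = r) ∧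
      ∀ c : Finset α, IsChain (· ≤ ·) (c : Set α) → c.card ≤ r) :
    ((∑ u : α, (Finset.univ.filter (fun v => v ≤ u)).card) ≤ ∑ k ∈ Finset.Icc (n - r + 1) n, k) ∧
    (((∑ u : α, (Finset.univ.filter (fun v => v ≤ u)).card) = ∑ k ∈ Finset.Icc (n - r + 1) n, k) ↔
      ∃ e : α ≃ Fin n, ∀ x y : α, x ≤ y ↔ Hle r (e x) (e y)) ∧
    ((∑ u : α, (Finset.univ.filter (fun v => v ≤ u)).card) + (n - r + 1).choose 2 ≤
      ∑ k ∈ Finset.Icc 1 n, k) := by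
  classical
  open Finset in
  -- abbreviations
  have hl : ∀ x : α, lev x ≤ r := fun x => hrank.2 _ (ups_chain htree x)
  -- the level-fiber counting function
  set A : ℕ → ℕ := fun d => (Finset.univ.filter fun x : α => lev x = d).card with hA
  -- double counting
  have hsum1 : (∑ u : α, (Finset.univ.filter (fun v => v ≤ u)).card) = ∑ x : α, lev x := by
    unfold lev
    simp only [Finset.card_filter]
    exact Finset.sum_comm
  have hmaps : ∀ x : α, x ∈ Finset.univ → lev x ∈ Finset.Icc 1 r :=
    fun x _ => Finset.mem_Icc.mpr ⟨lev_pos x, hl x⟩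
  have hfib : ∑ x : α, lev x = ∑ d ∈ Finset.Icc 1 r, d * A d := by
    rw [← Finset.sum_fiberwise_of_maps_to hmaps (fun x => lev x)]
    refine Finset.sum_congr rfl fun d _ => ?_
    rw [Finset.sum_congr rfl (fun x hx => (Finset.mem_filter.mp hx).2), Finset.sum_const,
      smul_eq_mul, mul_comm]
  have hcount : ∑ d ∈ Finset.Icc 1 r, A d = n := by
    rw [← hcard, ← Finset.card_univ]
    exact (Finset.card_eq_sum_card_fiberwise hmaps).symm
  -- a maximal-level element
  have hm : ∃ m : α, lev m = r := by
    obtain ⟨c, hc, hcc⟩ := hrank.1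
    have hne : c.Nonempty := Finset.card_pos.mp (by omega)
    obtain ⟨m, hmc, hmin⟩ := Finset.exists_minimal hne
    have hmle : ∀ x ∈ c, m ≤ x := by
      intro x hx
      by_cases hxm : x = m
      · exact le_of_eq hxm.symm
      · rcases hc hmc hx (fun h => hxm h.symm) with h | h
        · exact h
        · exact absurd (lt_of_le_of_ne h hxm) (fun hlt => hlt.not_ge (hmin hx h))
    refine ⟨m, le_antisymm (hl m) ?_⟩
    calc r = c.card := hcc.symm
      _ ≤ lev m := Finset.card_le_card fun x hx => by
          simp only [Finset.mem_filter, Finset.mem_univ, true_and]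
          exact hmle x hx
  have hapos : ∀ d ∈ Finset.Icc 1 r, 1 ≤ A d := by
    intro d hd
    rw [Finset.mem_Icc] at hd
    obtain ⟨m, hmr⟩ := hm
    obtain ⟨t, _, ht⟩ := lev_surj htree m d hd.1 (by omega)
    exact Finset.card_pos.mpr ⟨t, by simp [ht]⟩
  -- arithmetic decomposition
  have hsplit : ∑ d ∈ Finset.Icc 1 r, d * A d
      = (∑ d ∈ Finset.Icc 1 r, d) + ∑ d ∈ Finset.Icc 1 r, d * (A d - 1) := by
    rw [← Finset.sum_add_distrib]
    refine Finset.sum_congr rfl fun d hd => ?_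
    have h1 := hapos d hd
    obtain ⟨k, hk⟩ := Nat.exists_eq_add_of_le h1
    rw [hk]
    simp [Nat.mul_add, Nat.add_sub_cancel_left]
  have hsub : ∑ d ∈ Finset.Icc 1 r, (A d - 1) = n - r := by
    have h1 : ∑ d ∈ Finset.Icc 1 r, (A d - 1) + ∑ d ∈ Finset.Icc 1 r, 1
        = ∑ d ∈ Finset.Icc 1 r, A d := by
      rw [← Finset.sum_add_distrib]
      exact Finset.sum_congr rfl fun d hd => Nat.sub_add_cancel (hapos d hd)
    have h2 : ∑ d ∈ Finset.Icc 1 r, (1 : ℕ) = r := by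
      rw [Finset.sum_const, smul_eq_mul, mul_one, Nat.card_Icc]
      omega
    omega
  have hS : ∑ k ∈ Finset.Icc (n - r + 1) n, k
      = (∑ d ∈ Finset.Icc 1 r, d) + r * (n - r) := by
    have h1 : ∑ k ∈ Finset.Icc (n - r + 1) n, k = ∑ d ∈ Finset.Icc 1 r, (d + (n - r)) := by
      refine (Finset.sum_nbij' (i := fun d => d + (n - r)) (j := fun k => k - (n - r))
        ?_ ?_ ?_ ?_ ?_).symm
      · intro a ha; simp only [Finset.mem_Icc] at ha ⊢; omega
      · intro a ha; simp only [Finset.mem_Icc] at ha ⊢; omega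
      · intro a ha; simp only [Finset.mem_Icc] at ha ⊢; omega
      · intro a ha; simp only [Finset.mem_Icc] at ha ⊢; omega
      · intro a ha; simp only [Finset.mem_Icc] at ha ⊢; try omega
    rw [h1, Finset.sum_add_distrib, Finset.sum_const, smul_eq_mul, Nat.card_Icc]
    try congr 1
    try omega
  -- upper bound
  have hUBterm : ∀ d ∈ Finset.Icc 1 r, d * (A d - 1) ≤ r * (A d - 1) := by
    intro d hd
    exact Nat.mul_le_mul_right _ (Finset.mem_Icc.mp hd).2
  have hUB2 : ∑ d ∈ Finset.Icc 1 r, r * (A d - 1) = r * (n - r) := by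
    rw [← Finset.mul_sum, hsub]
  have part1 : (∑ u : α, (Finset.univ.filter (fun v => v ≤ u)).card)
      ≤ ∑ k ∈ Finset.Icc (n - r + 1) n, k := by
    rw [hsum1, hfib, hsplit, hS]
    have := le_trans (Finset.sum_le_sum hUBterm) (le_of_eq hUB2)
    omega
  have heqkey : ((∑ u : α, (Finset.univ.filter (fun v => v ≤ u)).card)
      = ∑ k ∈ Finset.Icc (n - r + 1) n, k)
      ↔ ∀ d ∈ Finset.Icc 1 r, d ≠ r → A d = 1 := by
    rw [hsum1, hfib, hsplit, hS]
    constructor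
    · intro h
      have h1 : ∑ d ∈ Finset.Icc 1 r, d * (A d - 1)
          = ∑ d ∈ Finset.Icc 1 r, r * (A d - 1) := by omega
      have h2 := (Finset.sum_eq_sum_iff_of_le hUBterm).mp h1
      intro d hd hdr
      have h3 := h2 d hd
      have h4 := Finset.mem_Icc.mp hd
      have h5 := hapos d hd
      by_contra hne
      have h6 : 1 ≤ A d - 1 := by omega
      have h7 : (d + 1) * (A d - 1) ≤ r * (A d - 1) :=
        Nat.mul_le_mul_right _ (by omega)
      have h8 : (d + 1) * (A d - 1) = d * (A d - 1) + (A d - 1) := by ring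
      omega
    · intro h
      have h1 : ∀ d ∈ Finset.Icc 1 r, d * (A d - 1) = r * (A d - 1) := by
        intro d hd
        by_cases hdr : d = r
        · rw [hdr]
        · rw [h d hd hdr]; simp
      rw [Finset.sum_congr rfl h1, hUB2]
  -- from an isomorphism, compute levels
  have hlev_of_iso : ∀ (e : α ≃ Fin n), (∀ x y : α, x ≤ y ↔ Hle r (e x) (e y)) →
      ∀ x : α, lev x = if ((e x : ℕ)) < r then r - (e x : ℕ) else r := by
    intro e he x
    have h1 : (Finset.univ.filter fun t : α => x ≤ t)
        = Finset.univ.filter fun t : α => Hle r (e x) (e t) := by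
      ext t
      simp only [Finset.mem_filter, Finset.mem_univ, true_and]
      exact he x t
    have h2 : (Finset.univ.filter fun t : α => Hle r (e x) (e t)).card
        = (Finset.univ.filter fun j : Fin n => Hle r (e x) j).card := by
      apply Finset.card_bij (fun t _ => e t)
      · intro t ht
        simp only [Finset.mem_filter, Finset.mem_univ, true_and] at *
        exact ht
      · intro t _ t' _ hh
        exact e.injective hh
      · intro j hj
        refine ⟨e.symm j, ?_, by simp⟩
        simp only [Finset.mem_filter, Finset.mem_univ, true_and] at *
        simpa using hj
    have : lev x = (Finset.univ.filter fun t : α => x ≤ t).card := rfl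
    rw [this, h1, h2, hle_card n r hr1 hrn]
  -- iso implies the key property
  have hisokey : (∃ e : α ≃ Fin n, ∀ x y : α, x ≤ y ↔ Hle r (e x) (e y)) →
      ∀ d ∈ Finset.Icc 1 r, d ≠ r → A d = 1 := by
    rintro ⟨e, he⟩ d hd hdr
    have hd' := Finset.mem_Icc.mp hd
    refine le_antisymm ?_ (hapos d hd)
    apply Finset.card_le_one.mpr
    intro x hx y hy
    simp only [Finset.mem_filter, Finset.mem_univ, true_and] at hx hy
    have h1 := hlev_of_iso e he x
    have h2 := hlev_of_iso e he y
    rw [hx] at h1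
    rw [hy] at h2
    apply e.injective
    apply Fin.ext
    have hex : ((e x : ℕ)) = r - d := by
      by_cases hc : ((e x : ℕ)) < r
      · rw [if_pos hc] at h1; omega
      · rw [if_neg hc] at h1; omega
    have hey : ((e y : ℕ)) = r - d := by
      by_cases hc : ((e y : ℕ)) < r
      · rw [if_pos hc] at h2; omega
      · rw [if_neg hc] at h2; omega
    rw [hex, hey]
  -- key property implies iso
  have hkeyiso : (∀ d ∈ Finset.Icc 1 r, d ≠ r → A d = 1) →
      ∃ e : α ≃ Fin n, ∀ x y : α, x ≤ y ↔ Hle r (e x) (e y) := by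
    intro hkey
    obtain ⟨m, hmr⟩ := hm
    have huniq : ∀ x y : α, lev x < r → lev x = lev y → x = y := by
      intro x y h1 h2
      have hmem : x ∈ Finset.univ.filter fun z : α => lev z = lev x := by simp
      have hmem' : y ∈ Finset.univ.filter fun z : α => lev z = lev x := by simp [h2.symm]
      have hcard1 : A (lev x) = 1 :=
        hkey (lev x) (Finset.mem_Icc.mpr ⟨lev_pos x, hl x⟩) (by omega)
      exact Finset.card_le_one.mp (le_of_eq hcard1) x hmem y hmem'
    have hleaf_le : ∀ x y : α, lev x = r → lev y < r → x ≤ y := by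
      intro x y hx hy
      obtain ⟨t, hxt, ht⟩ := lev_surj htree x (lev y) (lev_pos y) (by omega)
      have h := huniq t y (by omega) (by omega)
      exact h ▸ hxt
    have hchain_le : ∀ x y : α, lev x < r → lev y < r → lev y ≤ lev x → x ≤ y := by
      intro x y hx hy hxy
      have hmx : m ≤ x := hleaf_le m x hmr hx
      have hmy : m ≤ y := hleaf_le m y hmr hy
      rcases comp_of_le htree hmx hmy with h | h
      · exact h
      · rcases h.lt_or_eq with h' | h'
        · exact absurd (lev_lt_of_lt h') (by omega)
        · exact le_of_eq h'.symm
    have hAr : A r = n - r + 1 := by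
      have h1 : Finset.Icc 1 r = insert r (Finset.Icc 1 (r - 1)) := by
        ext d
        simp only [Finset.mem_Icc, Finset.mem_insert]
        omega
      have h2 : r ∉ Finset.Icc 1 (r - 1) := by
        simp only [Finset.mem_Icc]
        omega
      rw [h1, Finset.sum_insert h2] at hcount
      have h3 : ∑ d ∈ Finset.Icc 1 (r - 1), A d = ∑ d ∈ Finset.Icc 1 (r - 1), 1 :=
        Finset.sum_congr rfl fun d hd => by
          have hd' := Finset.mem_Icc.mp hd
          exact hkey d (Finset.mem_Icc.mpr ⟨hd'.1, by omega⟩) (by omega)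
      rw [h3, Finset.sum_const, smul_eq_mul, mul_one, Nat.card_Icc] at hcount
      omega
    have hLcard : Fintype.card (↥(Finset.univ.filter fun x : α => lev x = r))
        = n - r + 1 := by
      rw [Fintype.card_coe]
      rw [hA] at hAr
      exact hAr
    set eL := Fintype.equivFinOfCardEq hLcard with heL
    have hfv : ∀ k : Fin (n - r + 1), (if (k : ℕ) = 0 then 0 else r - 1 + (k : ℕ)) < n := by
      intro k
      have := k.isLt
      split_ifs <;> omega
    set f : α → Fin n := fun x =>
      if h : lev x < r then ⟨r - lev x, by have := lev_pos x; omega⟩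
      else ⟨_, hfv (eL ⟨x, Finset.mem_filter.mpr ⟨Finset.mem_univ x,
        le_antisymm (hl x) (not_lt.mp h)⟩⟩)⟩ with hfdef
    have hf1 : ∀ x : α, lev x < r → (f x : ℕ) = r - lev x := by
      intro x h
      simp only [hfdef, dif_pos h]
    have hf2 : ∀ x : α, ¬ lev x < r → ((f x : ℕ) = 0 ∨ r ≤ (f x : ℕ)) := by
      intro x h
      simp only [hfdef, dif_neg h]
      split_ifs with h'
      · left; rfl
      · right; omega
    have hgval : ∀ k k' : Fin (n - r + 1),
        (if (k : ℕ) = 0 then 0 else r - 1 + (k : ℕ))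
          = (if (k' : ℕ) = 0 then 0 else r - 1 + (k' : ℕ)) → k = k' := by
      intro k k' h
      apply Fin.ext
      split_ifs at h <;> omega
    have hfinj : Function.Injective f := by
      intro x y hxy
      have h1 : (f x : ℕ) = (f y : ℕ) := by rw [hxy]
      by_cases hx : lev x < r <;> by_cases hy' : lev y < r
      · rw [hf1 x hx, hf1 y hy'] at h1
        have hlx := hl x; have hly := hl y
        have := lev_pos x; have := lev_pos y
        exact huniq x y hx (by omega)
      · exfalso
        rw [hf1 x hx] at h1
        have := lev_pos x
        rcases hf2 y hy' with h2 | h2 <;> omega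
      · exfalso
        rw [hf1 y hy'] at h1
        have := lev_pos y
        rcases hf2 x hx with h2 | h2 <;> omega
      · simp only [hfdef, dif_neg hx, dif_neg hy'] at hxy
        have h2 := congrArg Fin.val hxy
        simp only at h2
        have h3 := hgval _ _ h2
        have h4 := eL.injective h3
        exact congrArg Subtype.val h4
    have hfbij : Function.Bijective f :=
      (Fintype.bijective_iff_injective_and_card f).mpr ⟨hfinj, by simp [hcard]⟩
    refine ⟨Equiv.ofBijective f hfbij, ?_⟩
    intro x y
    show x ≤ y ↔ Hle r (f x) (f y)
    by_cases hx : lev x < r <;> by_cases hy' : lev y < r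
    · constructor
      · intro hxy
        right; left
        have e1 := hf1 x hx
        have e2 := hf1 y hy'
        have e3 := lev_le_of_le hxy
        have := lev_pos x; have := lev_pos y
        exact ⟨by omega, by omega, by omega⟩
      · rintro (h | ⟨h1, h2, h3⟩ | ⟨h1, h2, h3⟩)
        · exact le_of_eq (hfinj h)
        · have e1 := hf1 x hx
          have e2 := hf1 y hy'
          have := hl x; have := hl y
          have := lev_pos x; have := lev_pos y
          exact hchain_le x y hx hy' (by omega)
        · exfalso
          have e1 := hf1 x hx
          have := lev_pos x
          omega
    · have hyr : lev y = r := le_antisymm (hl y) (not_lt.mp hy')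
      constructor
      · intro hxy
        exact absurd (lev_le_of_le hxy) (by omega)
      · rintro (h | ⟨h1, h2, h3⟩ | ⟨h1, h2, h3⟩)
        · exfalso
          have hxy : x = y := hfinj h
          rw [hxy] at hx
          omega
        · exfalso
          have e1 := hf1 x hx
          have := lev_pos x
          rcases hf2 y hy' with h0 | hge <;> omega
        · exfalso
          have e1 := hf1 x hx
          have := lev_pos x
          omega
    · have hxr : lev x = r := le_antisymm (hl x) (not_lt.mp hx)
      constructor
      · intro _
        have e2 := hf1 y hy'
        have hy1 := lev_pos y
        rcases hf2 x hx with h0 | hge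
        · right; left
          exact ⟨by omega, by omega, by omega⟩
        · right; right
          exact ⟨hge, by omega, by omega⟩
      · intro _
        exact hleaf_le x y hxr hy'
    · have hxr : lev x = r := le_antisymm (hl x) (not_lt.mp hx)
      have hyr : lev y = r := le_antisymm (hl y) (not_lt.mp hy')
      constructor
      · intro hxy
        have hq : x = y := by
          rcases hxy.lt_or_eq with h | h
          · exact absurd (lev_lt_of_lt h) (by omega)
          · exact h
        left
        rw [hq]
      · rintro (h | ⟨h1, h2, h3⟩ | ⟨h1, h2, h3⟩)
        · exact le_of_eq (hfinj h)
        · rcases hf2 x hx with h0x | hgex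
          · rcases hf2 y hy' with h0y | hgey
            · exact le_of_eq (hfinj (Fin.ext (by omega)))
            · exfalso; omega
          · exfalso; omega
        · rcases hf2 y hy' with h0y | hgey
          · exfalso; omega
          · exfalso; omega
  -- Gauss sum
  have hgauss : ∀ m : ℕ, ∑ k ∈ Finset.Icc 1 m, k = (m + 1).choose 2 := by
    intro m
    induction m with
    | zero => simp
    | succ m ih =>
      have hcc := Nat.choose_succ_succ (m + 1) 1
      rw [Nat.choose_one_right] at hcc
      simp only [Nat.succ_eq_add_one] at hcc
      norm_num at hcc
      rw [Finset.sum_Icc_succ_top (by omega : 1 ≤ m + 1), ih]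
      omega
  have hsplitn : ∑ k ∈ Finset.Icc 1 n, k
      = (∑ k ∈ Finset.Icc 1 (n - r), k) + ∑ k ∈ Finset.Icc (n - r + 1) n, k := by
    have hun : Finset.Icc 1 (n - r) ∪ Finset.Icc (n - r + 1) n = Finset.Icc 1 n := by
      ext k
      simp only [Finset.mem_union, Finset.mem_Icc]
      omega
    rw [← hun, Finset.sum_union (by
      rw [Finset.disjoint_left]
      intro a ha hb
      simp only [Finset.mem_Icc] at *
      omega)]
  have hch : (∑ k ∈ Finset.Icc 1 (n - r), k) = (n - r + 1).choose 2 := hgauss (n - r)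
  exact ⟨part1, heqkey.trans ⟨hkeyiso, hisokey⟩, by omega⟩
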